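/- Let π be the stationary distribution of the random walk on a weighted graph with symmetric adjacency matrix A (nonnegative, positive row sums), P = D^{-1}A, and let c : [n]×[n] → [0,∞) be any nonnegative function. Then Σ_{i,j} π_i (P^t)_{ij} c(i,j) ≤ sqrt(Tr(N^{2t})) · sqrt(Σ_{i,j} π_i π_j c(i,j)²), where N = D^{-1/2} A D^{-1/2} and π_i = D_{ii}/Tr(D). -/
import Mathlib


open Matrix Finset

lemma conj_pow_aux {n : ℕ} (B M C : Matrix (Fin n) (Fin n) ℝ)
    (hBC : B * C = 1) (hCB : C * B = 1) (t : ℕ) :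
    (B * M * C) ^ t = B * M ^ t * C := by
  induction t with
  | zero => simp [hBC]
  | succ t ih =>
      rw [pow_succ, ih, pow_succ]
      calc B * M ^ t * C * (B * M * C) = B * M ^ t * (C * B) * M * C := by
            noncomm_ring
        _ = B * (M ^ t * M) * C := by rw [hCB]; noncomm_ring

/-- Cauchy–Schwarz bound for correlations along random walks:
`Σ_{i,j} π_i (P^t)_{ij} c(i,j) ≤ sqrt(Tr(N^{2t})) · sqrt(Σ_{i,j} π_i π_j c(i,j)²)`. -/
theorem stmt_5 {n : ℕ} (A : Matrix (Fin n) (Fin n) ℝ) (hA : A.IsSymm)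
    (hpos : ∀ i j, 0 ≤ A i j) (d : Fin n → ℝ) (hd : ∀ i, d i = ∑ j, A i j)
    (hdpos : ∀ i, 0 < d i) (c : Fin n → Fin n → ℝ) (hc : ∀ i j, 0 ≤ c i j)
    (t : ℕ) (π : Fin n → ℝ) (hπ : ∀ i, π i = d i / ∑ j, d j) :
    ∑ i, ∑ j, π i * ((Matrix.diagonal (fun i => (d i)⁻¹) * A) ^ t) i j * c i j ≤
      Real.sqrt (((Matrix.diagonal (fun i => (Real.sqrt (d i))⁻¹) * A *
          Matrix.diagonal (fun i => (Real.sqrt (d i))⁻¹)) ^ (2 * t)).trace) *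
        Real.sqrt (∑ i, ∑ j, π i * π j * c i j ^ 2) := by
  rcases Nat.eq_zero_or_pos n with rfl | hn
  · simp [Matrix.trace]
  have hS : 0 < ∑ j, d j :=
    Finset.sum_pos (fun j _ => hdpos j)
      (by simp [Finset.univ_nonempty_iff, Fin.pos_iff_nonempty.mp hn])
  set P : Matrix (Fin n) (Fin n) ℝ := Matrix.diagonal (fun i => (d i)⁻¹) * A with hP
  set N : Matrix (Fin n) (Fin n) ℝ :=
    Matrix.diagonal (fun i => (Real.sqrt (d i))⁻¹) * A *
      Matrix.diagonal (fun i => (Real.sqrt (d i))⁻¹) with hN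
  have hsq : ∀ i, 0 < Real.sqrt (d i) := fun i => Real.sqrt_pos.2 (hdpos i)
  set E : Matrix (Fin n) (Fin n) ℝ := Matrix.diagonal (fun i => Real.sqrt (d i)) with hE
  set F : Matrix (Fin n) (Fin n) ℝ := Matrix.diagonal (fun i => (Real.sqrt (d i))⁻¹) with hF
  have hEF : E * F = 1 := by
    rw [hE, hF, Matrix.diagonal_mul_diagonal,
      show (fun i => Real.sqrt (d i) * (Real.sqrt (d i))⁻¹) = fun _ : Fin n => (1 : ℝ) from
        funext fun i => mul_inv_cancel₀ (hsq i).ne', Matrix.diagonal_one]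
  have hFE : F * E = 1 := by
    rw [hE, hF, Matrix.diagonal_mul_diagonal,
      show (fun i => (Real.sqrt (d i))⁻¹ * Real.sqrt (d i)) = fun _ : Fin n => (1 : ℝ) from
        funext fun i => inv_mul_cancel₀ (hsq i).ne', Matrix.diagonal_one]
  have hfun : (fun i => (Real.sqrt (d i))⁻¹) = fun i => Real.sqrt (d i) * (d i)⁻¹ := by
    funext i
    rw [← div_eq_mul_inv, Real.sqrt_div_self]
  -- N = E * P * F
  have hNE : N = E * P * F := by
    rw [hP, ← Matrix.mul_assoc E, hE, Matrix.diagonal_mul_diagonal, ← hfun, ← hF, hN]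
  have hNt : ∀ i j, (N ^ t) i j = Real.sqrt (d i) * (P ^ t) i j * (Real.sqrt (d j))⁻¹ := by
    intro i j
    rw [hNE, conj_pow_aux E P F hEF hFE, hE, hF, Matrix.mul_assoc,
      Matrix.diagonal_mul, Matrix.mul_diagonal]
    ring
  -- N symmetric, so N^t symmetric
  have hNsymm : (N ^ t)ᵀ = N ^ t := by
    rw [Matrix.transpose_pow]
    congr 1
    rw [hN, Matrix.transpose_mul, Matrix.transpose_mul, Matrix.diagonal_transpose, hA.eq,
      Matrix.mul_assoc]
  -- trace identity
  have htr : (N ^ (2 * t)).trace = ∑ i, ∑ j, ((N ^ t) i j) ^ 2 := by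
    rw [two_mul, pow_add, Matrix.trace]
    simp only [Matrix.diag_apply, Matrix.mul_apply]
    refine Finset.sum_congr rfl fun i _ => Finset.sum_congr rfl fun j _ => ?_
    have hji : (N ^ t) i j = (N ^ t) j i := congrFun (congrFun hNsymm j) i
    rw [← hji, sq]
  -- pointwise identity
  have hπnn : ∀ i, 0 ≤ π i := fun i => by rw [hπ i]; exact div_nonneg (hdpos i).le hS.le
  have key : ∀ i j, π i * (P ^ t) i j * c i j =
      (N ^ t) i j * (Real.sqrt (π i * π j) * c i j) := by
    intro i j
    have hsp : Real.sqrt (π i * π j) =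
        Real.sqrt (d i) * Real.sqrt (d j) / (∑ k, d k) := by
      rw [hπ i, hπ j, div_mul_div_comm, Real.sqrt_div (mul_nonneg (hdpos i).le (hdpos j).le),
        Real.sqrt_mul (hdpos i).le, Real.sqrt_mul_self hS.le]
    rw [hNt i j, hsp]
    have h1 : Real.sqrt (d i) * Real.sqrt (d i) = d i := Real.mul_self_sqrt (hdpos i).le
    have h2 : (Real.sqrt (d j))⁻¹ * Real.sqrt (d j) = 1 := inv_mul_cancel₀ (hsq j).ne'
    calc π i * (P ^ t) i j * c i j
        = d i / (∑ k, d k) * (P ^ t) i j * c i j := by rw [hπ i]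
      _ = (Real.sqrt (d i) * Real.sqrt (d i)) * ((Real.sqrt (d j))⁻¹ * Real.sqrt (d j)) *
            (P ^ t) i j * c i j / (∑ k, d k) := by rw [h1, h2]; ring
      _ = Real.sqrt (d i) * (P ^ t) i j * (Real.sqrt (d j))⁻¹ *
            (Real.sqrt (d i) * Real.sqrt (d j) / (∑ k, d k) * c i j) := by ring
  -- Cauchy–Schwarz
  calc ∑ i, ∑ j, π i * (P ^ t) i j * c i j
      = ∑ p : Fin n × Fin n, (N ^ t) p.1 p.2 * (Real.sqrt (π p.1 * π p.2) * c p.1 p.2) := by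
        rw [Fintype.sum_prod_type]
        exact Finset.sum_congr rfl fun i _ => Finset.sum_congr rfl fun j _ => key i j
    _ ≤ Real.sqrt (∑ p : Fin n × Fin n, ((N ^ t) p.1 p.2) ^ 2) *
        Real.sqrt (∑ p : Fin n × Fin n, (Real.sqrt (π p.1 * π p.2) * c p.1 p.2) ^ 2) := by
        have h2 := Finset.sum_mul_sq_le_sq_mul_sq Finset.univ
          (fun p : Fin n × Fin n => (N ^ t) p.1 p.2)
          (fun p : Fin n × Fin n => Real.sqrt (π p.1 * π p.2) * c p.1 p.2)
        calc (∑ p : Fin n × Fin n, (N ^ t) p.1 p.2 * (Real.sqrt (π p.1 * π p.2) * c p.1 p.2))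
            ≤ |∑ p : Fin n × Fin n, (N ^ t) p.1 p.2 * (Real.sqrt (π p.1 * π p.2) * c p.1 p.2)| :=
              le_abs_self _
          _ = Real.sqrt ((∑ p : Fin n × Fin n,
                (N ^ t) p.1 p.2 * (Real.sqrt (π p.1 * π p.2) * c p.1 p.2)) ^ 2) :=
              (Real.sqrt_sq_eq_abs _).symm
          _ ≤ Real.sqrt ((∑ p : Fin n × Fin n, ((N ^ t) p.1 p.2) ^ 2) *
                ∑ p : Fin n × Fin n, (Real.sqrt (π p.1 * π p.2) * c p.1 p.2) ^ 2) :=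
              Real.sqrt_le_sqrt h2
          _ = _ := Real.sqrt_mul (by positivity) _
    _ = _ := by
        congr 1
        · rw [htr, Fintype.sum_prod_type]
        · congr 1
          rw [Fintype.sum_prod_type]
          refine Finset.sum_congr rfl fun i _ => Finset.sum_congr rfl fun j _ => ?_
          rw [mul_pow, Real.sq_sqrt (mul_nonneg (hπnn i) (hπnn j))]
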